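/- Let g ∈ L²(ℝ), let W : ℝ → ℝ be measurable with 0 ≤ W(ξ) ≤ 1 for all ξ, let N ≥ 1 and γ ∈ (0,1), and let I = {ξ ∈ ℝ : W(ξ) ≤ 1 − (1−γ)^{1/N}}. Define F^{SC} = (1−W)^N·g, and F^{TH} equal to g on I and equal to (1−W)^N·g on ℝ∖I. Then ‖F^{TH} − F^{SC}‖_{L²} ≤ γ·‖g‖_{L²}. -/

import Mathlib

open scoped Classical

open MeasureTheory

/-- Comparison of the stopping-criterion IMF `F^SC = (1-W)^N g` and the thresholded IMF
`F^TH` (equal to `g` on `I = {ξ | W ξ ≤ 1 - (1-γ)^(1/N)}` and to `(1-W)^N g` elsewhere):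
`‖F^TH - F^SC‖_{L²} ≤ γ ‖g‖_{L²}`. -/
theorem stmt8 (g : ℝ → ℂ) (hg : MemLp g 2 volume) (W : ℝ → ℝ) (hWmeas : Measurable W)
    (hW : ∀ ξ : ℝ, W ξ ∈ Set.Icc (0 : ℝ) 1) (N : ℕ) (hN : 1 ≤ N)
    (γ : ℝ) (hγ : γ ∈ Set.Ioo (0 : ℝ) 1)
    (I : Set ℝ) (hI : I = {ξ : ℝ | W ξ ≤ 1 - (1 - γ) ^ (1 / (N : ℝ))})
    (FSC FTH : ℝ → ℂ)
    (hFSC : ∀ ξ : ℝ, FSC ξ = (((1 - W ξ) ^ N : ℝ) : ℂ) * g ξ)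
    (hFTH : ∀ ξ : ℝ, FTH ξ = if ξ ∈ I then g ξ else (((1 - W ξ) ^ N : ℝ) : ℂ) * g ξ) :
    eLpNorm (FTH - FSC) 2 volume ≤ ENNReal.ofReal γ * eLpNorm g 2 volume := by
  obtain ⟨hγ0, hγ1⟩ := hγ
  have hbound : ∀ ξ : ℝ, ‖(FTH - FSC) ξ‖ ≤ ‖((γ : ℂ) • g) ξ‖ := by
    intro ξ
    simp only [Pi.sub_apply, Pi.smul_apply, smul_eq_mul, hFSC, hFTH]
    by_cases hmem : ξ ∈ I
    · simp only [if_pos hmem]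
      have hWξ := hW ξ
      have h1W : 0 ≤ 1 - W ξ := by linarith [hWξ.2]
      have hle : (1 - γ) ^ (1 / (N : ℝ)) ≤ 1 - W ξ := by
        rw [hI] at hmem; simp only [Set.mem_setOf_eq] at hmem; linarith
      have hpow : 1 - γ ≤ (1 - W ξ) ^ N := by
        have h0 : (0:ℝ) ≤ (1 - γ) ^ (1 / (N : ℝ)) :=
          Real.rpow_nonneg (by linarith) _
        have h2 := pow_le_pow_left₀ h0 hle N
        have heq : ((1 - γ) ^ (1 / (N : ℝ))) ^ N = 1 - γ := by
          rw [← Real.rpow_natCast ((1 - γ) ^ (1 / (N : ℝ))) N,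
            ← Real.rpow_mul (by linarith), one_div,
            inv_mul_cancel₀ (Nat.cast_ne_zero.mpr (by omega)), Real.rpow_one]
        rw [heq] at h2
        exact h2
      have hpow1 : (1 - W ξ) ^ N ≤ 1 := pow_le_one₀ h1W (by linarith [hWξ.1])
      have : g ξ - (((1 - W ξ) ^ N : ℝ) : ℂ) * g ξ
          = (((1 - (1 - W ξ) ^ N : ℝ)) : ℂ) * g ξ := by push_cast; ring
      rw [this, norm_mul, norm_mul]
      apply mul_le_mul_of_nonneg_right _ (norm_nonneg _)
      rw [Complex.norm_real, Complex.norm_real, Real.norm_eq_abs, Real.norm_eq_abs,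
        abs_of_nonneg (by linarith), abs_of_nonneg hγ0.le]
      linarith
    · simp only [if_neg hmem, sub_self, norm_zero]
      positivity
  calc eLpNorm (FTH - FSC) 2 volume ≤ eLpNorm ((γ : ℂ) • g) 2 volume :=
        eLpNorm_mono hbound
    _ = (‖(γ : ℂ)‖₊ : ENNReal) * eLpNorm g 2 volume := eLpNorm_const_smul _ _ _ _
    _ = ENNReal.ofReal γ * eLpNorm g 2 volume := by
        congr 1
        rw [← enorm_eq_nnnorm, ← ofReal_norm]
        simp [abs_of_nonneg hγ0.le]
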